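/- Let g be a Lie algebra and θ : g × g → g* a skew-symmetric 2-cocycle that is cyclic, i.e., θ(X,Y)(Z) = θ(Y,Z)(X) for all X,Y,Z ∈ g. Then the T*-extension T*_θ(g) = g ⊕ g* with bracket [X+f, Y+g] = [X,Y] + ad*(X)(g) − ad*(Y)(f) + θ(X,Y) is a quadratic Lie algebra with the invariant bilinear form B(X+f, Y+g) = f(Y) + g(X). -/
import Mathlib


/-- If `θ` is moreover cyclic (`θ(X,Y)(Z) = θ(Y,Z)(X)`), then the
`T*`-extension `T*_θ(g) = g ⊕ g*` is a quadratic Lie algebra with the invariant form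
`B(X+f, Y+g) = f(Y) + g(X)`. -/
theorem stmt_9 (L : Type*) [LieRing L] [LieAlgebra ℂ L] [FiniteDimensional ℂ L]
    (θ : L → L → Module.Dual ℂ L)
    (hθskew : ∀ x y, θ x y = - θ y x)
    (hθlin : ∀ (a : ℂ) (x x' y : L), θ (a • x + x') y = a • θ x y + θ x' y)
    (hcocycle : ∀ x y z w : L,
      θ x y ⁅z, w⁆ + θ ⁅x, y⁆ z w + θ y z ⁅x, w⁆ + θ ⁅y, z⁆ x w +
        θ z x ⁅y, w⁆ + θ ⁅z, x⁆ y w = 0)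
    (hcyclic : ∀ x y z : L, θ x y z = θ y z x)
    (br : L × Module.Dual ℂ L → L × Module.Dual ℂ L → L × Module.Dual ℂ L)
    (hbr1 : ∀ u v, (br u v).1 = ⁅u.1, v.1⁆)
    (hbr2 : ∀ u v (w : L),
      (br u v).2 w = - v.2 ⁅u.1, w⁆ + u.2 ⁅v.1, w⁆ + θ u.1 v.1 w)
    (Bb : L × Module.Dual ℂ L → L × Module.Dual ℂ L → ℂ)
    (hBb : ∀ u v, Bb u v = u.2 v.1 + v.2 u.1) :
    -- Lie algebra structure
    (∀ (c : ℂ) (u u' v), br (c • u + u') v = c • br u v + br u' v) ∧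
    (∀ u v, br u v = - br v u) ∧
    (∀ u v w, br u (br v w) = br (br u v) w + br v (br u w)) ∧
    -- B is symmetric, non-degenerate and invariant
    (∀ u v, Bb u v = Bb v u) ∧
    (∀ u, (∀ v, Bb u v = 0) → u = 0) ∧
    (∀ u v w, Bb (br u v) w = Bb u (br v w)) := by
  -- pointwise versions of the assumptions on θ
  have hθ0 : ∀ y, θ 0 y = 0 := by
    intro y
    have h := hθlin 1 0 0 y
    simpa using h
  have hsmulC : ∀ (a : ℂ) (x y z : L), θ (a • x) y z = a * θ x y z := by
    intro a x y z
    have h := hθlin a x 0 y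
    simp only [add_zero, hθ0] at h
    rw [h]; simp [smul_eq_mul]
  have haddC : ∀ (x x' y z : L), θ (x + x') y z = θ x y z + θ x' y z := by
    intro x x' y z
    have h := hθlin 1 x x' y
    simp only [one_smul] at h
    rw [h]; simp
  have hnegC : ∀ (x y z : L), θ (-x) y z = - θ x y z := by
    intro x y z
    have h := hsmulC (-1) x y z
    simpa using h
  have hskewC : ∀ (x y z : L), θ x y z = - θ y x z := by
    intro x y z
    rw [hθskew x y]; simp
  refine ⟨?_, ?_, ?_, ?_, ?_, ?_⟩
  · -- linearity
    intro c u u' v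
    refine Prod.ext ?_ (LinearMap.ext fun w => ?_)
    · simp [hbr1, add_lie, smul_lie]
    · simp only [Prod.snd_add, Prod.smul_snd, LinearMap.add_apply, LinearMap.smul_apply,
        hbr2, Prod.fst_add, Prod.smul_fst, add_lie, smul_lie, map_add, map_smul,
        LinearMap.neg_apply, smul_eq_mul]
      rw [haddC, hsmulC]
      ring
  · -- skew symmetry
    intro u v
    refine Prod.ext ?_ (LinearMap.ext fun w => ?_)
    · simp only [hbr1, Prod.fst_neg]; rw [← lie_skew v.1 u.1, neg_neg]
    · simp only [Prod.snd_neg, LinearMap.neg_apply, hbr2]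
      rw [hskewC u.1 v.1 w]
      ring
  · -- Leibniz / Jacobi
    intro u v w
    refine Prod.ext ?_ (LinearMap.ext fun z => ?_)
    · simp [hbr1, lie_lie]
    · simp only [Prod.snd_add, LinearMap.add_apply, hbr2, hbr1, map_neg, map_add,
        lie_lie, map_sub]
      have e1 : θ u.1 ⁅v.1, w.1⁆ z = - θ ⁅v.1, w.1⁆ u.1 z := hskewC _ _ _
      have e2 : θ v.1 ⁅u.1, w.1⁆ z = θ ⁅w.1, u.1⁆ v.1 z := by
        rw [hskewC, ← lie_skew u.1 w.1, hnegC, neg_neg]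
      have e3 : θ u.1 w.1 ⁅v.1, z⁆ = - θ w.1 u.1 ⁅v.1, z⁆ := hskewC _ _ _
      linear_combination -hcocycle u.1 v.1 w.1 z + e1 - e2 + e3
  · -- symmetric
    intro u v
    rw [hBb, hBb]; ring
  · -- non-degenerate
    intro u hu
    have h2 : u.2 = 0 := by
      ext y
      have h := hu (y, 0)
      simpa [hBb] using h
    have h1 : u.1 = 0 := by
      rw [← Module.forall_dual_apply_eq_zero_iff ℂ u.1]
      intro φ
      have h := hu (0, φ)
      simpa [hBb, h2] using h
    exact Prod.ext h1 h2
  · -- invariant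
    intro u v w
    simp only [hBb, hbr1, hbr2]
    rw [hcyclic u.1 v.1 w.1, ← lie_skew v.1 u.1, map_neg, ← lie_skew w.1 u.1, map_neg]
    ring
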